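/- Let z > 0 and let π : ℝ → ℝ be measurable and nonnegative. Then the GP posterior normalizing constant for a single observation satisfies the exact identity C_1(π; z) = z^{−1} ∫_ℝ π(ξ) dξ; equivalently, ∫_{ξ<0} π(ξ) ∫_{−ξ z}^∞ σ^{−2}(1 + ξ z/σ)^{−(1+1/ξ)} dσ dξ + ∫_{ξ>0} π(ξ) ∫_0^∞ σ^{−2}(1 + ξ z/σ)^{−(1+1/ξ)} dσ dξ = z^{−1} ∫_ℝ π(ξ) dξ (as an identity in [0,∞]). -/

import Mathlib

open MeasureTheory Real Set
open scoped ENNReal Classical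

/-- The inner integral over the scale `σ` of the Generalized Pareto posterior
integrand, for a fixed shape `ξ`, data `z` and prior `π(σ,ξ) ∝ π(ξ)/σ`:
`∫_{max(0, -ξ z_m)}^∞ σ^{-(m+1)} ∏_{i=1}^m (1 + ξ z_i/σ)^{-(1+1/ξ)} dσ`,
with the Gumbel interpretation `σ^{-(m+1)} exp(-(Σ_i z_i)/σ)` when `ξ = 0`. -/
noncomputable def gpInner (m : ℕ) (z : Fin m → ℝ) (ξ : ℝ) : ℝ≥0∞ :=
  ∫⁻ σ in Set.Ioi (max 0 (-ξ * ⨆ i, z i)),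
    ENNReal.ofReal
      (if ξ = 0 then σ ^ (-((m : ℝ) + 1)) * Real.exp (-(∑ i, z i) / σ)
       else σ ^ (-((m : ℝ) + 1)) * ∏ i, (1 + ξ * z i / σ) ^ (-(1 + 1 / ξ)))

/-- The Generalized Pareto posterior normalizing constant
`C_m(π; z) = ∫_ℝ π(ξ) ∫_{max(0,-ξ z_m)}^∞ σ^{-(m+1)} ∏_i (1+ξ z_i/σ)^{-(1+1/ξ)} dσ dξ`. -/
noncomputable def gpC (m : ℕ) (z : Fin m → ℝ) (p : ℝ → ℝ) : ℝ≥0∞ :=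
  ∫⁻ ξ : ℝ, ENNReal.ofReal (p ξ) * gpInner m z ξ

section GPHelpers
open Filter

lemma lint_aux {a l : ℝ} {g g' : ℝ → ℝ}
    (hcont : ContinuousWithinAt g (Ici a) a)
    (hderiv : ∀ x ∈ Ioi a, HasDerivAt g (g' x) x)
    (hpos : ∀ x ∈ Ioi a, 0 ≤ g' x)
    (hg : Tendsto g atTop (nhds l)) (hga : g a = 0) :
    ∫⁻ x in Ioi a, ENNReal.ofReal (g' x) = ENNReal.ofReal l := by
  rw [← ofReal_integral_eq_lintegral_ofReal
      (integrableOn_Ioi_deriv_of_nonneg hcont hderiv hpos hg)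
      ((ae_restrict_iff' measurableSet_Ioi).2 (Filter.Eventually.of_forall hpos)),
    integral_Ioi_of_hasDerivAt_of_nonneg hcont hderiv hpos hg, hga, sub_zero]

lemma rpow_neg_two (σ : ℝ) (hσ : 0 < σ) : σ ^ (-(2:ℝ)) = (σ^2)⁻¹ := by
  rw [Real.rpow_neg hσ.le]; norm_num [Real.rpow_natCast σ 2]

lemma hu_deriv (c σ : ℝ) (hσ : σ ≠ 0) :
    HasDerivAt (fun x : ℝ => 1 + c / x) (c * -(σ^2)⁻¹) σ := by
  simpa [div_eq_mul_inv] using ((hasDerivAt_inv hσ).const_mul c).const_add 1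

lemma hu_derivE (z σ : ℝ) (hσ : σ ≠ 0) :
    HasDerivAt (fun x : ℝ => -z / x) (-z * -(σ^2)⁻¹) σ := by
  simpa [div_eq_mul_inv] using (hasDerivAt_inv hσ).const_mul (-z)

lemma tendsto_u (c : ℝ) : Tendsto (fun σ : ℝ => 1 + c / σ) atTop (nhds 1) := by
  have h := tendsto_inv_atTop_zero.const_mul c
  simpa [div_eq_mul_inv] using tendsto_const_nhds.add h

lemma caseA (z ξ : ℝ) (hz : 0 < z) (hξ : 0 < ξ) :
    ∫⁻ σ in Ioi (0:ℝ), ENNReal.ofReal (σ ^ (-(2:ℝ)) * (1 + ξ*z/σ) ^ (-(1+1/ξ))) =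
      ENNReal.ofReal z⁻¹ := by
  set g : ℝ → ℝ := fun σ => if σ ≤ 0 then 0 else z⁻¹ * (1 + ξ*z/σ) ^ (-ξ⁻¹) with hgdef
  have hg0 : g 0 = 0 := by simp [hgdef]
  have hderiv : ∀ σ ∈ Ioi (0:ℝ),
      HasDerivAt g (σ ^ (-(2:ℝ)) * (1 + ξ*z/σ) ^ (-(1+1/ξ))) σ := by
    intro σ hσ
    rw [mem_Ioi] at hσ
    have hb : 0 < 1 + ξ*z/σ := by positivity
    have h2 := ((hu_deriv (ξ*z) σ hσ.ne').rpow_const (p := -ξ⁻¹) (Or.inl hb.ne')).const_mul z⁻¹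
    have heq : g =ᶠ[nhds σ] fun x => z⁻¹ * (1 + ξ*z/x) ^ (-ξ⁻¹) := by
      filter_upwards [lt_mem_nhds hσ] with x hx
      rw [hgdef]
      simp only [not_le.2 hx, if_false]
    have h3 := h2.congr_of_eventuallyEq heq
    refine h3.congr_deriv ?_
    rw [rpow_neg_two σ hσ, show (-(1+1/ξ)) = -ξ⁻¹ - 1 by ring]
    field_simp
  have hpos : ∀ σ ∈ Ioi (0:ℝ), 0 ≤ σ ^ (-(2:ℝ)) * (1 + ξ*z/σ) ^ (-(1+1/ξ)) := by
    intro σ hσ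
    rw [mem_Ioi] at hσ
    have hb : (0:ℝ) < 1 + ξ*z/σ := by positivity
    exact mul_nonneg (Real.rpow_nonneg hσ.le _) (Real.rpow_nonneg hb.le _)
  have htop : Tendsto g atTop (nhds z⁻¹) := by
    have h1 : Tendsto (fun σ : ℝ => z⁻¹ * (1 + ξ*z/σ) ^ (-ξ⁻¹)) atTop (nhds z⁻¹) := by
      have h2 := (tendsto_u (ξ*z)).rpow_const (p := -ξ⁻¹) (Or.inl one_ne_zero)
      simpa using h2.const_mul z⁻¹
    refine h1.congr' ?_
    filter_upwards [eventually_gt_atTop (0:ℝ)] with x hx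
    simp [hgdef, not_le.2 hx]
  have hcont : ContinuousWithinAt g (Ici (0:ℝ)) 0 := by
    rw [← continuousWithinAt_diff_self, Ici_sdiff_left]
    have h1 : Tendsto (fun σ : ℝ => z⁻¹ * (1 + ξ*z/σ) ^ (-ξ⁻¹)) (nhdsWithin 0 (Ioi 0))
        (nhds 0) := by
      have hbase : Tendsto (fun σ : ℝ => 1 + ξ*z/σ) (nhdsWithin 0 (Ioi 0)) atTop := by
        apply tendsto_atTop_add_const_left
        have := tendsto_inv_nhdsGT_zero.const_mul_atTop (by positivity : (0:ℝ) < ξ*z)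
        exact Tendsto.congr (fun x => (div_eq_mul_inv _ _).symm) this
      have := (tendsto_rpow_neg_atTop (by positivity : (0:ℝ) < ξ⁻¹)).comp hbase
      simpa using this.const_mul z⁻¹
    have h2 : Tendsto g (nhdsWithin 0 (Ioi 0)) (nhds 0) := by
      refine h1.congr' ?_
      filter_upwards [eventually_mem_nhdsWithin] with x hx
      simp [hgdef, not_le.2 (mem_Ioi.1 hx)]
    show Tendsto g (nhdsWithin 0 (Ioi 0)) (nhds (g 0))
    rwa [hg0]
  exact lint_aux hcont hderiv hpos htop hg0

lemma caseB (z ξ : ℝ) (hz : 0 < z) (hξ : ξ < 0) :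
    ∫⁻ σ in Ioi (-ξ*z), ENNReal.ofReal (σ ^ (-(2:ℝ)) * (1 + ξ*z/σ) ^ (-(1+1/ξ))) =
      ENNReal.ofReal z⁻¹ := by
  have ha : 0 < -ξ*z := by nlinarith
  set g : ℝ → ℝ := fun σ => z⁻¹ * (1 + ξ*z/σ) ^ (-ξ⁻¹) with hgdef
  have hexp : (0:ℝ) < -ξ⁻¹ := by rw [neg_pos]; exact inv_neg''.mpr hξ
  have hne : ξ*z ≠ 0 := ne_of_lt (by nlinarith)
  have hg0 : g (-ξ*z) = 0 := by
    have : 1 + ξ*z/(-ξ*z) = 0 := by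
      rw [show -ξ*z = -(ξ*z) by ring, div_neg, div_self hne]; ring
    rw [hgdef]
    simp only [this, Real.zero_rpow hexp.ne', mul_zero]
  have hb : ∀ σ : ℝ, -ξ*z < σ → 0 < 1 + ξ*z/σ := by
    intro σ hσ
    have hσ0 : 0 < σ := ha.trans hσ
    have : -1 < ξ*z/σ := by
      rw [lt_div_iff₀ hσ0]
      nlinarith
    linarith
  have hderiv : ∀ σ ∈ Ioi (-ξ*z),
      HasDerivAt g (σ ^ (-(2:ℝ)) * (1 + ξ*z/σ) ^ (-(1+1/ξ))) σ := by
    intro σ hσ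
    rw [mem_Ioi] at hσ
    have hσ0 : 0 < σ := ha.trans hσ
    have hb' := hb σ hσ
    have h2 := ((hu_deriv (ξ*z) σ hσ0.ne').rpow_const (p := -ξ⁻¹) (Or.inl hb'.ne')).const_mul z⁻¹
    refine h2.congr_deriv ?_
    rw [rpow_neg_two σ hσ0, show (-(1+1/ξ)) = -ξ⁻¹ - 1 by ring]
    field_simp [hσ0.ne', hξ.ne, hz.ne']
  have hpos : ∀ σ ∈ Ioi (-ξ*z), 0 ≤ σ ^ (-(2:ℝ)) * (1 + ξ*z/σ) ^ (-(1+1/ξ)) := by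
    intro σ hσ
    rw [mem_Ioi] at hσ
    exact mul_nonneg (Real.rpow_nonneg (ha.trans hσ).le _)
      (Real.rpow_nonneg (hb σ hσ).le _)
  have htop : Tendsto g atTop (nhds z⁻¹) := by
    have h2 := (tendsto_u (ξ*z)).rpow_const (p := -ξ⁻¹) (Or.inl one_ne_zero)
    simpa [hgdef] using h2.const_mul z⁻¹
  have hcont : ContinuousWithinAt g (Ici (-ξ*z)) (-ξ*z) := by
    have hc : ContinuousAt (fun σ : ℝ => 1 + ξ*z/σ) (-ξ*z) :=
      continuousAt_const.add (continuousAt_const.div continuousAt_id ha.ne')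
    have : ContinuousAt g (-ξ*z) := by
      rw [hgdef]
      exact (hc.rpow_const (Or.inr hexp.le)).const_mul _
    exact this.continuousWithinAt
  exact lint_aux hcont hderiv hpos htop hg0

lemma caseC (z : ℝ) (hz : 0 < z) :
    ∫⁻ σ in Ioi (0:ℝ), ENNReal.ofReal (σ ^ (-(2:ℝ)) * Real.exp (-z/σ)) =
      ENNReal.ofReal z⁻¹ := by
  set g : ℝ → ℝ := fun σ => if σ ≤ 0 then 0 else z⁻¹ * Real.exp (-z/σ) with hgdef
  have hg0 : g 0 = 0 := by simp [hgdef]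
  have hE : ∀ σ : ℝ, σ ≠ 0 → HasDerivAt (fun x : ℝ => Real.exp (-z/x))
      (Real.exp (-z/σ) * (-z * -(σ^2)⁻¹)) σ := fun σ hσ => (hu_derivE z σ hσ).exp
  have hderiv : ∀ σ ∈ Ioi (0:ℝ),
      HasDerivAt g (σ ^ (-(2:ℝ)) * Real.exp (-z/σ)) σ := by
    intro σ hσ
    rw [mem_Ioi] at hσ
    have h2 := (hE σ hσ.ne').const_mul z⁻¹
    have heq : g =ᶠ[nhds σ] fun x => z⁻¹ * Real.exp (-z/x) := by
      filter_upwards [lt_mem_nhds hσ] with x hx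
      rw [hgdef]
      simp only [not_le.2 hx, if_false]
    have h3 := h2.congr_of_eventuallyEq heq
    refine h3.congr_deriv ?_
    rw [rpow_neg_two σ hσ]
    field_simp
  have hpos : ∀ σ ∈ Ioi (0:ℝ), 0 ≤ σ ^ (-(2:ℝ)) * Real.exp (-z/σ) := by
    intro σ hσ
    rw [mem_Ioi] at hσ
    exact mul_nonneg (Real.rpow_nonneg hσ.le _) (Real.exp_nonneg _)
  have htop : Tendsto g atTop (nhds z⁻¹) := by
    have h1 : Tendsto (fun σ : ℝ => -z/σ) atTop (nhds 0) := by
      have := tendsto_inv_atTop_zero.const_mul (-z)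
      simpa [div_eq_mul_inv] using this
    have h2 := (Real.continuous_exp.continuousAt.tendsto.comp (by simpa using h1)).const_mul z⁻¹
    have h3 : Tendsto (fun σ : ℝ => z⁻¹ * Real.exp (-z/σ)) atTop (nhds z⁻¹) := by
      simpa using h2
    refine h3.congr' ?_
    filter_upwards [eventually_gt_atTop (0:ℝ)] with x hx
    rw [hgdef]; simp only [not_le.2 hx, if_false]
  have hcont : ContinuousWithinAt g (Ici (0:ℝ)) 0 := by
    rw [← continuousWithinAt_diff_self, Ici_sdiff_left]
    have hbase : Tendsto (fun σ : ℝ => -z/σ) (nhdsWithin 0 (Ioi 0)) atBot := by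
      have := (tendsto_const_mul_atBot_of_neg (show (-z:ℝ) < 0 by linarith)).2
        tendsto_inv_nhdsGT_zero
      simpa [div_eq_mul_inv] using this
    have h1 : Tendsto (fun σ : ℝ => z⁻¹ * Real.exp (-z/σ)) (nhdsWithin 0 (Ioi 0)) (nhds 0) := by
      have := Real.tendsto_exp_atBot.comp hbase
      simpa using this.const_mul z⁻¹
    have h2 : Tendsto g (nhdsWithin 0 (Ioi 0)) (nhds 0) := by
      refine h1.congr' ?_
      filter_upwards [eventually_mem_nhdsWithin] with x hx
      rw [hgdef]; simp only [not_le.2 (mem_Ioi.1 hx), if_false]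
    show Tendsto g (nhdsWithin 0 (Ioi 0)) (nhds (g 0))
    rwa [hg0]
  exact lint_aux hcont hderiv hpos htop hg0

lemma key (z : ℝ) (hz : 0 < z) (ξ : ℝ) :
    gpInner 1 (fun _ => z) ξ = ENNReal.ofReal z⁻¹ := by
  rw [gpInner]
  simp only [ciSup_const, Fin.prod_univ_one, Fin.sum_univ_one, Nat.cast_one]
  rcases lt_trichotomy ξ 0 with h | h | h
  · rw [show max 0 (-ξ*z) = -ξ*z from max_eq_right (by nlinarith), ← caseB z ξ hz h]
    refine setLIntegral_congr_fun measurableSet_Ioi (fun σ hσ => ?_)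
    rw [if_neg h.ne]
    norm_num
  · subst h
    rw [show max 0 (-(0:ℝ)*z) = 0 by norm_num, ← caseC z hz]
    refine setLIntegral_congr_fun measurableSet_Ioi (fun σ hσ => ?_)
    rw [if_pos rfl]
    norm_num
  · rw [show max 0 (-ξ*z) = 0 from max_eq_left (by nlinarith), ← caseA z ξ hz h]
    refine setLIntegral_congr_fun measurableSet_Ioi (fun σ hσ => ?_)
    rw [if_neg h.ne']
    norm_num

end GPHelpers

/-- For a single observation `z > 0`, the GP posterior normalizing constant
satisfies the exact identity `C_1(π; z) = z⁻¹ ∫_ℝ π(ξ) dξ`; equivalently, the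
split form over `ξ < 0` and `ξ > 0` equals `z⁻¹ ∫_ℝ π(ξ) dξ` (in `[0,∞]`). -/
theorem gp_C1_eq (z : ℝ) (hz : 0 < z) (p : ℝ → ℝ)
    (hmeas : Measurable p) (hnn : ∀ ξ, 0 ≤ p ξ) :
    gpC 1 (fun _ => z) p = ENNReal.ofReal z⁻¹ * ∫⁻ ξ : ℝ, ENNReal.ofReal (p ξ) ∧
    (∫⁻ ξ in Set.Iio (0 : ℝ), ENNReal.ofReal (p ξ) *
        ∫⁻ σ in Set.Ioi (-ξ * z),
          ENNReal.ofReal (σ ^ (-(2 : ℝ)) * (1 + ξ * z / σ) ^ (-(1 + 1 / ξ)))) +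
      (∫⁻ ξ in Set.Ioi (0 : ℝ), ENNReal.ofReal (p ξ) *
        ∫⁻ σ in Set.Ioi (0 : ℝ),
          ENNReal.ofReal (σ ^ (-(2 : ℝ)) * (1 + ξ * z / σ) ^ (-(1 + 1 / ξ)))) =
      ENNReal.ofReal z⁻¹ * ∫⁻ ξ : ℝ, ENNReal.ofReal (p ξ) := by
  constructor
  · simp only [gpC]
    simp_rw [key z hz]
    rw [lintegral_mul_const _ hmeas.ennreal_ofReal, mul_comm]
  · have hA : (∫⁻ ξ in Iio (0:ℝ), ENNReal.ofReal (p ξ) *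
        ∫⁻ σ in Ioi (-ξ * z),
          ENNReal.ofReal (σ ^ (-(2 : ℝ)) * (1 + ξ * z / σ) ^ (-(1 + 1 / ξ)))) =
        (∫⁻ ξ in Iio (0:ℝ), ENNReal.ofReal (p ξ)) * ENNReal.ofReal z⁻¹ := by
      rw [← lintegral_mul_const _ hmeas.ennreal_ofReal]
      refine setLIntegral_congr_fun measurableSet_Iio (fun ξ hξ => ?_)
      rw [caseB z ξ hz hξ]
    have hB : (∫⁻ ξ in Ioi (0:ℝ), ENNReal.ofReal (p ξ) *
        ∫⁻ σ in Ioi (0:ℝ),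
          ENNReal.ofReal (σ ^ (-(2 : ℝ)) * (1 + ξ * z / σ) ^ (-(1 + 1 / ξ)))) =
        (∫⁻ ξ in Ioi (0:ℝ), ENNReal.ofReal (p ξ)) * ENNReal.ofReal z⁻¹ := by
      rw [← lintegral_mul_const _ hmeas.ennreal_ofReal]
      refine setLIntegral_congr_fun measurableSet_Ioi (fun ξ hξ => ?_)
      rw [caseA z ξ hz hξ]
    rw [hA, hB, ← add_mul]
    have hsplit : (∫⁻ ξ in Iio (0:ℝ), ENNReal.ofReal (p ξ)) +
        ∫⁻ ξ in Ioi (0:ℝ), ENNReal.ofReal (p ξ) = ∫⁻ ξ : ℝ, ENNReal.ofReal (p ξ) := by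
      rw [← lintegral_union measurableSet_Ioi
          ((Iic_disjoint_Ioi le_rfl).mono_left Iio_subset_Iic_self), Iio_union_Ioi]
      have h0 : ({(0:ℝ)}ᶜ : Set ℝ) =ᵐ[volume] (univ : Set ℝ) := by
        rw [ae_eq_univ, compl_compl]
        exact Real.volume_singleton
      rw [setLIntegral_congr h0, setLIntegral_univ]
    rw [hsplit, mul_comm]
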